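/- A bicomplex number λ is an eigenvalue of an n×n bicomplex matrix A (i.e., there exists v = v₁e + v₂e† ∈ 𝔹ℂⁿ with both idempotent components v₁, v₂ nonzero and Av = λv) if and only if det(A - λI) = 0. -/
import Mathlib


noncomputable section

/-- Bicomplex numbers, modeled as `ℂ × ℂ` via the idempotent isomorphism
(componentwise operations). -/
abbrev BC : Type := ℂ × ℂ

/-- The imaginary unit `i` of `𝔹ℂ`. -/
def BC.i : BC := (Complex.I, Complex.I)

/-- The second imaginary unit `j` of `𝔹ℂ` (so `z = a + j b ↦ (a - i b, a + i b)`). -/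
def BC.j : BC := (-Complex.I, Complex.I)

/-- The idempotent `e = (1 + ij)/2`. -/
def BC.e : BC := (1 + BC.i * BC.j) / 2

/-- The idempotent `e† = (1 - ij)/2`. -/
def BC.ed : BC := (1 - BC.i * BC.j) / 2

/-- The embedding of `ℂ` into `𝔹ℂ` (a complex `z` has idempotent components `z, z`). -/
def toBC (z : ℂ) : BC := (z, z)

lemma BC.mulVec_fst {n : ℕ} (M : Matrix (Fin n) (Fin n) BC) (v : Fin n → BC) (i : Fin n) :
    (M.mulVec v i).1 = (M.map Prod.fst).mulVec (fun j => (v j).1) i := by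
  simp [Matrix.mulVec, dotProduct, Prod.fst_sum, Prod.snd_sum]

lemma BC.mulVec_snd {n : ℕ} (M : Matrix (Fin n) (Fin n) BC) (v : Fin n → BC) (i : Fin n) :
    (M.mulVec v i).2 = (M.map Prod.snd).mulVec (fun j => (v j).2) i := by
  simp [Matrix.mulVec, dotProduct, Prod.fst_sum, Prod.snd_sum]

/-- `λ` is an eigenvalue of a bicomplex matrix `A` (there is `v` with both
idempotent components nonzero and `Av = λv`) iff `det(A - λI) = 0`. -/
theorem bc_eigenvalue_iff {n : ℕ} (A : Matrix (Fin n) (Fin n) BC) (lam : BC) :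
    (∃ v : Fin n → BC, (fun i => (v i).1) ≠ 0 ∧ (fun i => (v i).2) ≠ 0 ∧
      A.mulVec v = lam • v) ↔ (A - lam • (1 : Matrix (Fin n) (Fin n) BC)).det = 0 := by
  set M := A - lam • (1 : Matrix (Fin n) (Fin n) BC) with hM
  have key : ∀ v : Fin n → BC, (A.mulVec v = lam • v) ↔ M.mulVec v = 0 := by
    intro v
    rw [hM, Matrix.sub_mulVec, sub_eq_zero]
    constructor
    · intro h; rw [h]; ext i <;> simp [Matrix.mulVec, dotProduct, Matrix.one_apply,
        Finset.mul_sum, mul_ite, Prod.smul_def, smul_eq_mul]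
    · intro h; rw [h]; ext i <;> simp [Matrix.mulVec, dotProduct, Matrix.one_apply,
        Finset.mul_sum, mul_ite, Prod.smul_def, smul_eq_mul]
  have hdet1 : (M.det).1 = (M.map Prod.fst).det := by
    exact (RingHom.map_det (RingHom.fst ℂ ℂ) M)
  have hdet2 : (M.det).2 = (M.map Prod.snd).det := by
    exact (RingHom.map_det (RingHom.snd ℂ ℂ) M)
  constructor
  · rintro ⟨v, h1, h2, hv⟩
    rw [key] at hv
    have e1 : (M.map Prod.fst).mulVec (fun j => (v j).1) = 0 := by
      ext i; rw [← BC.mulVec_fst]; rw [hv]; rfl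
    have e2 : (M.map Prod.snd).mulVec (fun j => (v j).2) = 0 := by
      ext i; rw [← BC.mulVec_snd]; rw [hv]; rfl
    have d1 : (M.map Prod.fst).det = 0 :=
      Matrix.exists_mulVec_eq_zero_iff.mp ⟨_, h1, e1⟩
    have d2 : (M.map Prod.snd).det = 0 :=
      Matrix.exists_mulVec_eq_zero_iff.mp ⟨_, h2, e2⟩
    exact Prod.ext (by rw [hdet1, d1]; rfl) (by rw [hdet2, d2]; rfl)
  · intro hd
    obtain ⟨v1, hv1, e1⟩ := Matrix.exists_mulVec_eq_zero_iff.mpr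
      (by rw [← hdet1, hd]; rfl)
    obtain ⟨v2, hv2, e2⟩ := Matrix.exists_mulVec_eq_zero_iff.mpr
      (by rw [← hdet2, hd]; rfl)
    refine ⟨fun i => (v1 i, v2 i), by simpa using hv1, by simpa using hv2, ?_⟩
    rw [key]
    ext i
    · rw [BC.mulVec_fst]; simp only; rw [show (fun j => ((v1 j, v2 j) : BC).1) = v1 from rfl, e1]; rfl
    · rw [BC.mulVec_snd]; simp only; rw [show (fun j => ((v1 j, v2 j) : BC).2) = v2 from rfl, e2]; rfl
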